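/- Let A be a real normed algebra (‖ab‖ = ‖a‖‖b‖ for the norm of an inner product) with left identity 1, and let H = 1^⊥ be the orthogonal complement of 1. Then for h ∈ H and any a ∈ A, left multiplication satisfies h(ha) = -‖h‖² a; more generally (h₁h₂ + h₂h₁)a = -2⟨h₁,h₂⟩ a for h₁, h₂ ∈ H, so that A is a module over the Clifford algebra C(H). -/
import Mathlib

open scoped RealInnerProductSpace

theorem stmt17 (A : Type*) [NormedAddCommGroup A] [InnerProductSpace ℝ A]
    (mul : A →ₗ[ℝ] A →ₗ[ℝ] A)
    (hcomp : ∀ a b : A, ‖mul a b‖ = ‖a‖ * ‖b‖)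
    (e : A) (he : ∀ a : A, mul e a = a) :
    (∀ (h a : A), ⟪h, e⟫ = 0 → mul h (mul h a) = -(‖h‖ ^ 2) • a) ∧
    (∀ (h₁ h₂ a : A), ⟪h₁, e⟫ = 0 → ⟪h₂, e⟫ = 0 →
      mul h₁ (mul h₂ a) + mul h₂ (mul h₁ a) = (-(2 * ⟪h₁, h₂⟫)) • a) := by
  -- step 0: the norm identity in inner-product form
  have norm2 : ∀ a b : A, ⟪mul a b, mul a b⟫ = ⟪a, a⟫ * ⟪b, b⟫ := by
    intro a b
    rw [real_inner_self_eq_norm_mul_norm, real_inner_self_eq_norm_mul_norm,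
      real_inner_self_eq_norm_mul_norm, hcomp]
    ring
  -- polarize in the first argument
  have pol1 : ∀ a c b : A, ⟪mul a b, mul c b⟫ = ⟪a, c⟫ * ⟪b, b⟫ := by
    intro a c b
    have h1 := norm2 (a + c) b
    have h2 := norm2 a b
    have h3 := norm2 c b
    simp only [map_add, LinearMap.add_apply, inner_add_add_self] at h1
    rw [real_inner_comm (mul a b) (mul c b)] at h1
    rw [real_inner_comm a c] at h1
    linarith [h1, h2, h3]
  -- polarize again in the second argument
  have pol2 : ∀ a c b d : A,
      ⟪mul a b, mul c d⟫ + ⟪mul a d, mul c b⟫ = 2 * ⟪a, c⟫ * ⟪b, d⟫ := by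
    intro a c b d
    have h1 := pol1 a c (b + d)
    have h2 := pol1 a c b
    have h3 := pol1 a c d
    simp only [map_add, inner_add_add_self, inner_add_left, inner_add_right] at h1
    have c1 := real_inner_comm d b
    linear_combination h1 - h2 - h3 - ⟪a, c⟫ * c1
  -- skew-adjointness of left multiplication by elements orthogonal to e
  have skew : ∀ h : A, ⟪h, e⟫ = 0 → ∀ b d : A, ⟪mul h b, d⟫ = -⟪mul h d, b⟫ := by
    intro h hh b d
    have := pol2 h e b d
    rw [he, he, hh] at this
    linarith
  -- same first argument twice
  have pol3 : ∀ a b d : A, ⟪mul a b, mul a d⟫ = ⟪a, a⟫ * ⟪b, d⟫ := by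
    intro a b d
    have := pol2 a a b d
    have c1 := real_inner_comm (mul a d) (mul a b)
    linear_combination (this + c1) / 2
  constructor
  · intro h a hh
    apply ext_inner_right ℝ
    intro v
    rw [skew h hh (mul h a) v, pol3, real_inner_smul_left]
    rw [real_inner_self_eq_norm_sq h, real_inner_comm v a]
    ring
  · intro h₁ h₂ a h1 h2
    apply ext_inner_right ℝ
    intro v
    rw [inner_add_left, skew h₁ h1 (mul h₂ a) v, skew h₂ h2 (mul h₁ a) v,
      real_inner_smul_left]
    have := pol2 h₁ h₂ v a
    have c1 := real_inner_comm (mul h₂ v) (mul h₁ a)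
    have c2 := real_inner_comm a v
    linear_combination -this + c1 - 2 * ⟪h₁, h₂⟫ * c2
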